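/- arXiv:math/0407217 — 4 statements merged into one kernel-verified Lean document; each statement's English description precedes it below -/
import Mathlib

section
/- Let C be a monoidal category equipped with two braidings c and c'. Then the mixed double D_{X,Y} = c'_{Y,X} ∘ c_{X,Y} is a twine of C, i.e., it satisfies: (DB0) D_{I,I} = id; (DB1) (D_{X,Y} ⊗ id_Z) ∘ D_{X⊗Y,Z} = (id_X ⊗ D_{Y,Z}) ∘ D_{X,Y⊗Z}; and (DB2) (D_{X⊗Y,Z} ⊗ id_T)(id_X ⊗ D_{Y,Z}^{-1} ⊗ id_T)(id_X ⊗ D_{Y,Z⊗T}) = (id_X ⊗ D_{Y,Z⊗T})(id_X ⊗ D_{Y,Z}^{-1} ⊗ id_T)(D_{X⊗Y,Z} ⊗ id_T). -/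
set_option maxHeartbeats 1000000
open CategoryTheory MonoidalCategory

/-- The mixed double `D_{X,Y} = c'_{Y,X} ∘ c_{X,Y}` of two braidings `c`, `c'`. -/
def mixedDouble {C : Type*} [Category C] [MonoidalCategory C]
    (c c' : BraidedCategory C) (X Y : C) : X ⊗ Y ≅ X ⊗ Y :=
  c.braiding X Y ≪≫ c'.braiding Y X

namespace MixedDoubleAux
variable {C : Type*} [Category C] [MonoidalCategory C]

lemma bt_left (c : BraidedCategory C) (X Y Z : C) :
    (c.braiding (X ⊗ Y) Z).hom =
      (α_ X Y Z).hom ≫ X ◁ (c.braiding Y Z).hom ≫ (α_ X Z Y).inv ≫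
        (c.braiding X Z).hom ▷ Y ≫ (α_ Z X Y).hom := by
  letI := c; exact BraidedCategory.braiding_tensor_left_hom X Y Z

lemma bt_right (c : BraidedCategory C) (X Y Z : C) :
    (c.braiding X (Y ⊗ Z)).hom =
      (α_ X Y Z).inv ≫ (c.braiding X Y).hom ▷ Z ≫ (α_ Y X Z).hom ≫
        Y ◁ (c.braiding X Z).hom ≫ (α_ Y Z X).inv := by
  letI := c; exact BraidedCategory.braiding_tensor_right_hom X Y Z

lemma nat_left (c : BraidedCategory C) {X Y : C} (f : X ⟶ Y) (Z : C) :
    f ▷ Z ≫ (c.braiding Y Z).hom = (c.braiding X Z).hom ≫ Z ◁ f :=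
  c.braiding_naturality_left f Z

lemma nat_right (c : BraidedCategory C) (X : C) {Y Z : C} (f : Y ⟶ Z) :
    X ◁ f ≫ (c.braiding X Z).hom = (c.braiding X Y).hom ≫ f ▷ X :=
  c.braiding_naturality_right X f

lemma yb (c : BraidedCategory C) (X Y Z : C) :
    (α_ X Y Z).inv ≫ (c.braiding X Y).hom ▷ Z ≫ (α_ Y X Z).hom ≫
    Y ◁ (c.braiding X Z).hom ≫ (α_ Y Z X).inv ≫ (c.braiding Y Z).hom ▷ X ≫ (α_ Z Y X).hom =
      X ◁ (c.braiding Y Z).hom ≫ (α_ X Z Y).inv ≫ (c.braiding X Z).hom ▷ Y ≫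
      (α_ Z X Y).hom ≫ Z ◁ (c.braiding X Y).hom := by
  letI := c; exact BraidedCategory.yang_baxter X Y Z

lemma R1 (c c' : BraidedCategory C) (X Y Z : C) :
    (c'.braiding Z X).hom ▷ Y ≫ (α_ X Z Y).hom ≫ X ◁ (c'.braiding Z Y).hom ≫
      (α_ X Y Z).inv ≫ (c.braiding X Y).hom ▷ Z =
    (α_ Z X Y).hom ≫ Z ◁ (c.braiding X Y).hom ≫ (α_ Z Y X).inv ≫
      (c'.braiding Z Y).hom ▷ X ≫ (α_ Y Z X).hom ≫ Y ◁ (c'.braiding Z X).hom ≫ (α_ Y X Z).inv := by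
  have h := nat_right c' Z ((c.braiding X Y).hom)
  rw [bt_right c' Z X Y, bt_right c' Z Y X] at h
  rw [← cancel_epi (α_ Z X Y).inv]
  simpa only [Category.assoc, Iso.inv_hom_id_assoc] using h.symm

lemma R2 (c : BraidedCategory C) (X Y Z : C) :
    (α_ X Y Z).hom ≫ X ◁ (c.braiding Y Z).hom ≫ (α_ X Z Y).inv ≫
      (c.braiding X Z).hom ▷ Y ≫ (α_ Z X Y).hom ≫ Z ◁ (c.braiding X Y).hom =
    (c.braiding X Y).hom ▷ Z ≫ (α_ Y X Z).hom ≫ Y ◁ (c.braiding X Z).hom ≫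
      (α_ Y Z X).inv ≫ (c.braiding Y Z).hom ▷ X ≫ (α_ Z Y X).hom := by
  rw [← cancel_epi (α_ X Y Z).inv]
  simpa only [Category.assoc, Iso.inv_hom_id_assoc] using (yb c X Y Z).symm

lemma R3 (c' : BraidedCategory C) (X Y Z : C) :
    (c'.braiding Z Y).hom ▷ X ≫ (α_ Y Z X).hom ≫ Y ◁ (c'.braiding Z X).hom ≫
      (α_ Y X Z).inv ≫ (c'.braiding Y X).hom ▷ Z =
    (α_ Z Y X).hom ≫ Z ◁ (c'.braiding Y X).hom ≫ (α_ Z X Y).inv ≫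
      (c'.braiding Z X).hom ▷ Y ≫ (α_ X Z Y).hom ≫ X ◁ (c'.braiding Z Y).hom ≫ (α_ X Y Z).inv := by
  rw [← cancel_mono (α_ X Y Z).hom, ← cancel_epi (α_ Z Y X).inv]
  simpa only [Category.assoc, Iso.inv_hom_id_assoc, Iso.inv_hom_id, Category.comp_id] using yb c' Z Y X

lemma R4 (c c' : BraidedCategory C) (X Y Z : C) :
    (c.braiding Y Z).hom ▷ X ≫ (α_ Z Y X).hom ≫ Z ◁ (c'.braiding Y X).hom ≫
      (α_ Z X Y).inv ≫ (c'.braiding Z X).hom ▷ Y ≫ (α_ X Z Y).hom =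
    (α_ Y Z X).hom ≫ Y ◁ (c'.braiding Z X).hom ≫ (α_ Y X Z).inv ≫
      (c'.braiding Y X).hom ▷ Z ≫ (α_ X Y Z).hom ≫ X ◁ (c.braiding Y Z).hom := by
  have h := nat_left c' ((c.braiding Y Z).hom) X
  rw [bt_left c' Z Y X, bt_left c' Y Z X] at h
  simpa only [Category.assoc] using h


lemma db1 (c c' : BraidedCategory C) (X Y Z : C) :
    (mixedDouble c c' (X ⊗ Y) Z).hom ≫ ((mixedDouble c c' X Y).hom ▷ Z) =
      (α_ X Y Z).hom ≫ (mixedDouble c c' X (Y ⊗ Z)).hom ≫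
        (X ◁ (mixedDouble c c' Y Z).hom) ≫ (α_ X Y Z).inv := by
  dsimp only [mixedDouble, Iso.trans_hom]
  rw [bt_left c X Y Z, bt_right c' Z X Y, bt_right c X Y Z, bt_left c' Y Z X]
  simp only [Category.assoc, Iso.hom_inv_id_assoc, Iso.inv_hom_id_assoc,
    comp_whiskerRight, MonoidalCategory.whiskerLeft_comp]
  slice_lhs 5 9 => rw [R1 c c' X Y Z]
  simp only [Category.assoc, Iso.hom_inv_id_assoc, Iso.inv_hom_id_assoc]
  slice_lhs 1 6 => rw [R2 c X Y Z]
  simp only [Category.assoc, Iso.hom_inv_id_assoc, Iso.inv_hom_id_assoc]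
  slice_lhs 6 10 => rw [R3 c' X Y Z]
  slice_lhs 5 10 => rw [R4 c c' X Y Z]
  simp only [Category.assoc, Iso.inv_hom_id_assoc]



lemma decompL (c c' : BraidedCategory C) (X Y Z : C) :
    (mixedDouble c c' (X ⊗ Y) Z).hom =
      (α_ X Y Z).hom ≫ X ◁ (c.braiding Y Z).hom ≫ (α_ X Z Y).inv ≫
        (mixedDouble c c' X Z).hom ▷ Y ≫ (α_ X Z Y).hom ≫
        X ◁ (c'.braiding Z Y).hom ≫ (α_ X Y Z).inv := by
  dsimp only [mixedDouble, Iso.trans_hom]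
  rw [bt_left c X Y Z, bt_right c' Z X Y]
  simp only [Category.assoc, Iso.hom_inv_id_assoc, comp_whiskerRight]

lemma decompR (c c' : BraidedCategory C) (X Y Z : C) :
    (mixedDouble c c' X (Y ⊗ Z)).hom =
      (α_ X Y Z).inv ≫ (c.braiding X Y).hom ▷ Z ≫ (α_ Y X Z).hom ≫
        Y ◁ (mixedDouble c c' X Z).hom ≫ (α_ Y X Z).inv ≫
        (c'.braiding Y X).hom ▷ Z ≫ (α_ X Y Z).hom := by
  dsimp only [mixedDouble, Iso.trans_hom]
  rw [bt_right c X Y Z, bt_left c' Y Z X]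
  simp only [Category.assoc, Iso.inv_hom_id_assoc, MonoidalCategory.whiskerLeft_comp]

lemma key {X Y Z T : C} (u : X⊗Z ⟶ X⊗Z) (w : Y⊗T ⟶ Y⊗T) (e : Y⊗Z ≅ Z⊗Y) (g : Z⊗Y ≅ Y⊗Z) :
    ((α_ (X⊗Y) Z T).hom ≫ (α_ X Y (Z⊗T)).hom ≫
       X ◁ ((α_ Y Z T).inv ≫ e.hom ▷ T ≫ (α_ Z Y T).hom ≫ Z ◁ w ≫ (α_ Z Y T).inv ≫
         g.hom ▷ T ≫ (α_ Y Z T).hom) ≫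
       (α_ X Y (Z⊗T)).inv ≫ (α_ (X⊗Y) Z T).inv) ≫
    ((α_ X Y Z).hom ▷ T ≫ (X ◁ (g.inv ≫ e.inv)) ▷ T ≫ (α_ X Y Z).inv ▷ T) ≫
    (((α_ X Y Z).hom ≫ X ◁ e.hom ≫ (α_ X Z Y).inv ≫ u ▷ Y ≫ (α_ X Z Y).hom ≫
       X ◁ g.hom ≫ (α_ X Y Z).inv) ▷ T)
    =
    (((α_ X Y Z).hom ≫ X ◁ e.hom ≫ (α_ X Z Y).inv ≫ u ▷ Y ≫ (α_ X Z Y).hom ≫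
       X ◁ g.hom ≫ (α_ X Y Z).inv) ▷ T) ≫
    ((α_ X Y Z).hom ▷ T ≫ (X ◁ (g.inv ≫ e.inv)) ▷ T ≫ (α_ X Y Z).inv ▷ T) ≫
    ((α_ (X⊗Y) Z T).hom ≫ (α_ X Y (Z⊗T)).hom ≫
       X ◁ ((α_ Y Z T).inv ≫ e.hom ▷ T ≫ (α_ Z Y T).hom ≫ Z ◁ w ≫ (α_ Z Y T).inv ≫
         g.hom ▷ T ≫ (α_ Y Z T).hom) ≫
       (α_ X Y (Z⊗T)).inv ≫ (α_ (X⊗Y) Z T).inv) := by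
  calc
    _ = (α_ X Y Z).hom ▷ T ≫ (α_ X (Y⊗Z) T).hom ≫ X ◁ (e.hom ▷ T) ≫
          X ◁ (α_ Z Y T).hom ≫ (α_ X Z (Y⊗T)).inv ≫ (X⊗Z) ◁ w ≫
          (α_ X Z (Y⊗T)).hom ≫ X ◁ (α_ Z Y T).inv ≫
          X ◁ ((g.hom ≫ g.inv) ▷ T) ≫ X ◁ ((e.inv ≫ e.hom) ▷ T) ≫
          X ◁ (α_ Z Y T).hom ≫ (α_ X Z (Y⊗T)).inv ≫ u ▷ (Y⊗T) ≫
          (α_ X Z (Y⊗T)).hom ≫ X ◁ (α_ Z Y T).inv ≫ X ◁ (g.hom ▷ T) ≫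
          (α_ X (Y⊗Z) T).inv ≫ (α_ X Y Z).inv ▷ T := by
      monoidal
    _ = (α_ X Y Z).hom ▷ T ≫ (α_ X (Y⊗Z) T).hom ≫ X ◁ (e.hom ▷ T) ≫
          X ◁ (α_ Z Y T).hom ≫ (α_ X Z (Y⊗T)).inv ≫ ((X⊗Z) ◁ w ≫ u ▷ (Y⊗T)) ≫
          (α_ X Z (Y⊗T)).hom ≫ X ◁ (α_ Z Y T).inv ≫ X ◁ (g.hom ▷ T) ≫
          (α_ X (Y⊗Z) T).inv ≫ (α_ X Y Z).inv ▷ T := by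
      simp only [Iso.hom_inv_id, Iso.inv_hom_id, MonoidalCategory.id_whiskerRight,
        MonoidalCategory.whiskerLeft_id, Category.comp_id, Category.id_comp]
      monoidal
    _ = (α_ X Y Z).hom ▷ T ≫ (α_ X (Y⊗Z) T).hom ≫ X ◁ (e.hom ▷ T) ≫
          X ◁ (α_ Z Y T).hom ≫ (α_ X Z (Y⊗T)).inv ≫ (u ▷ (Y⊗T) ≫ (X⊗Z) ◁ w) ≫
          (α_ X Z (Y⊗T)).hom ≫ X ◁ (α_ Z Y T).inv ≫ X ◁ (g.hom ▷ T) ≫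
          (α_ X (Y⊗Z) T).inv ≫ (α_ X Y Z).inv ▷ T := by
      rw [whisker_exchange]
    _ = (α_ X Y Z).hom ▷ T ≫ (α_ X (Y⊗Z) T).hom ≫ X ◁ (e.hom ▷ T) ≫
          X ◁ (α_ Z Y T).hom ≫ (α_ X Z (Y⊗T)).inv ≫ u ▷ (Y⊗T) ≫
          (α_ X Z (Y⊗T)).hom ≫ X ◁ (α_ Z Y T).inv ≫
          X ◁ ((g.hom ≫ g.inv) ▷ T) ≫ X ◁ ((e.inv ≫ e.hom) ▷ T) ≫
          X ◁ (α_ Z Y T).hom ≫ (α_ X Z (Y⊗T)).inv ≫ (X⊗Z) ◁ w ≫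
          (α_ X Z (Y⊗T)).hom ≫ X ◁ (α_ Z Y T).inv ≫ X ◁ (g.hom ▷ T) ≫
          (α_ X (Y⊗Z) T).inv ≫ (α_ X Y Z).inv ▷ T := by
      simp only [Iso.hom_inv_id, Iso.inv_hom_id, MonoidalCategory.id_whiskerRight,
        MonoidalCategory.whiskerLeft_id, Category.comp_id, Category.id_comp]
      monoidal
    _ = _ := by
      monoidal


lemma db0 (c c' : BraidedCategory C) :
    (mixedDouble c c' (𝟙_ C) (𝟙_ C)).hom = 𝟙 (𝟙_ C ⊗ 𝟙_ C) := by
  dsimp only [mixedDouble, Iso.trans_hom]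
  have h : ∀ d : BraidedCategory C,
      (d.braiding (𝟙_ C) (𝟙_ C)).hom = (λ_ (𝟙_ C)).hom ≫ (ρ_ (𝟙_ C)).inv := by
    intro d
    letI := d
    rw [← braiding_rightUnitor (𝟙_ C), Category.assoc, Iso.hom_inv_id,
      Category.comp_id]
  rw [h c, h c', unitors_equal]
  simp

end MixedDoubleAux

open MixedDoubleAux in
/-- If `c` and `c'` are two braidings on a monoidal category `C`,
then the mixed double `D_{X,Y} = c'_{Y,X} ∘ c_{X,Y}` is a twine: it satisfies
(DB0) `D_{I,I} = id`, (DB1) the fusion axiom, and (DB2) the four-object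
commutation axiom (associators inserted in the non-strict setting). -/
theorem mixedDouble_isTwine {C : Type*} [Category C] [MonoidalCategory C]
    (c c' : BraidedCategory C) :
    -- (DB0)
    ((mixedDouble c c' (𝟙_ C) (𝟙_ C)).hom = 𝟙 (𝟙_ C ⊗ 𝟙_ C)) ∧
    -- (DB1)
    (∀ X Y Z : C,
      (mixedDouble c c' (X ⊗ Y) Z).hom ≫ ((mixedDouble c c' X Y).hom ⊗ₘ 𝟙 Z) =
        (α_ X Y Z).hom ≫ (mixedDouble c c' X (Y ⊗ Z)).hom ≫
          (𝟙 X ⊗ₘ (mixedDouble c c' Y Z).hom) ≫ (α_ X Y Z).inv) ∧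
    -- (DB2)
    (∀ X Y Z T : C,
      letI a₁ : ((X ⊗ Y) ⊗ Z) ⊗ T ⟶ ((X ⊗ Y) ⊗ Z) ⊗ T :=
        (mixedDouble c c' (X ⊗ Y) Z).hom ⊗ₘ 𝟙 T
      letI a₂ : ((X ⊗ Y) ⊗ Z) ⊗ T ⟶ ((X ⊗ Y) ⊗ Z) ⊗ T :=
        ((α_ X Y Z).hom ⊗ₘ 𝟙 T) ≫ ((𝟙 X ⊗ₘ (mixedDouble c c' Y Z).inv) ⊗ₘ 𝟙 T) ≫
          ((α_ X Y Z).inv ⊗ₘ 𝟙 T)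
      letI a₃ : ((X ⊗ Y) ⊗ Z) ⊗ T ⟶ ((X ⊗ Y) ⊗ Z) ⊗ T :=
        (α_ (X ⊗ Y) Z T).hom ≫ (α_ X Y (Z ⊗ T)).hom ≫
          (𝟙 X ⊗ₘ (mixedDouble c c' Y (Z ⊗ T)).hom) ≫
          (α_ X Y (Z ⊗ T)).inv ≫ (α_ (X ⊗ Y) Z T).inv
      a₃ ≫ a₂ ≫ a₁ = a₁ ≫ a₂ ≫ a₃) := by

  refine ⟨db0 c c', ?_, ?_⟩
  · intro X Y Z
    simpa only [tensorHom_id, id_tensorHom] using db1 c c' X Y Z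
  · intro X Y Z T
    simp only [tensorHom_id, id_tensorHom]
    rw [decompL c c' X Y Z, decompR c c' Y Z T]
    dsimp only [mixedDouble, Iso.trans_hom, Iso.trans_inv]
    exact key ((c.braiding X Z).hom ≫ (c'.braiding Z X).hom)
      ((c.braiding Y T).hom ≫ (c'.braiding T Y).hom)
      (c.braiding Y Z) (c'.braiding Z Y)
end

section
/- Let D be a twine on a monoidal category C. Then D_{X,I} = id_X and D_{I,X} = id_X for all objects X. -/
open CategoryTheory MonoidalCategory

/-- If `D` is a twine on a monoidal category `C` (a natural
automorphism of the tensor product satisfying (DB0) and (DB1)), then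
`D_{X,I} = id_X` and `D_{I,X} = id_X` for all objects `X`
(as endomorphisms of `X ⊗ 𝟙_ C` and `𝟙_ C ⊗ X` in the non-strict setting). -/
theorem twine_unit {C : Type*} [Category C] [MonoidalCategory C]
    (D : ∀ X Y : C, X ⊗ Y ≅ X ⊗ Y)
    (nat : ∀ {X X' Y Y' : C} (f : X ⟶ X') (g : Y ⟶ Y'),
      (f ⊗ₘ g) ≫ (D X' Y').hom = (D X Y).hom ≫ (f ⊗ₘ g))
    (db0 : (D (𝟙_ C) (𝟙_ C)).hom = 𝟙 (𝟙_ C ⊗ 𝟙_ C))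
    (db1 : ∀ X Y Z : C,
      (D (X ⊗ Y) Z).hom ≫ ((D X Y).hom ⊗ₘ 𝟙 Z) =
        (α_ X Y Z).hom ≫ (D X (Y ⊗ Z)).hom ≫ (𝟙 X ⊗ₘ (D Y Z).hom) ≫ (α_ X Y Z).inv) :
    ∀ X : C, (D X (𝟙_ C)).hom = 𝟙 (X ⊗ 𝟙_ C) ∧ (D (𝟙_ C) X).hom = 𝟙 (𝟙_ C ⊗ X) := by
  intro X
  constructor
  · -- D X I = id
    have h := db1 X (𝟙_ C) (𝟙_ C)
    rw [db0] at h
    have e2 : (D X (𝟙_ C ⊗ 𝟙_ C)).hom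
        = (𝟙 X ⊗ₘ (λ_ (𝟙_ C)).hom) ≫ (D X (𝟙_ C)).hom ≫ (𝟙 X ⊗ₘ (λ_ (𝟙_ C)).inv) := by
      have hn := nat (𝟙 X) (λ_ (𝟙_ C)).hom
      rw [← cancel_mono (𝟙 X ⊗ₘ (λ_ (𝟙_ C)).hom)]
      simp only [Category.assoc, tensorHom_comp_tensorHom, Iso.inv_hom_id, Category.id_comp,
        Category.comp_id, id_tensorHom_id, ← hn]
    have e1 : (D (X ⊗ 𝟙_ C) (𝟙_ C)).hom
        = ((ρ_ X).hom ⊗ₘ 𝟙 (𝟙_ C)) ≫ (D X (𝟙_ C)).hom ≫ ((ρ_ X).inv ⊗ₘ 𝟙 (𝟙_ C)) := by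
      have hn := nat (ρ_ X).hom (𝟙 (𝟙_ C))
      rw [← cancel_mono ((ρ_ X).hom ⊗ₘ 𝟙 (𝟙_ C))]
      simp only [Category.assoc, tensorHom_comp_tensorHom, Iso.inv_hom_id, Category.id_comp,
        Category.comp_id, id_tensorHom_id, ← hn]
    rw [e1, e2] at h
    simp only [tensorHom_id, id_tensorHom, id_tensorHom_id, id_whiskerRight, MonoidalCategory.whiskerLeft_id, Category.id_comp, Category.comp_id] at h
    have t1 : (α_ X (𝟙_ C) (𝟙_ C)).hom ≫ (X ◁ (λ_ (𝟙_ C)).hom) = (ρ_ X).hom ▷ (𝟙_ C) :=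
      triangle X (𝟙_ C)
    have t2 : (X ◁ (λ_ (𝟙_ C)).inv) ≫ (α_ X (𝟙_ C) (𝟙_ C)).inv = (ρ_ X).inv ▷ (𝟙_ C) := by
      rw [← cancel_mono ((ρ_ X).hom ▷ (𝟙_ C)), ← t1]
      simp
    have key : (D X (𝟙_ C)).hom ▷ (𝟙_ C) = 𝟙 ((X ⊗ 𝟙_ C) ⊗ 𝟙_ C) := by
      rw [← cancel_epi (((ρ_ X).hom ▷ 𝟙_ C) ≫ (D X (𝟙_ C)).hom ≫ ((ρ_ X).inv ▷ 𝟙_ C)),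
        Category.comp_id]
      calc (((ρ_ X).hom ▷ 𝟙_ C) ≫ (D X (𝟙_ C)).hom ≫ ((ρ_ X).inv ▷ 𝟙_ C)) ≫
            (D X (𝟙_ C)).hom ▷ 𝟙_ C
          = (α_ X (𝟙_ C) (𝟙_ C)).hom ≫
              ((X ◁ (λ_ (𝟙_ C)).hom) ≫ (D X (𝟙_ C)).hom ≫ (X ◁ (λ_ (𝟙_ C)).inv)) ≫
              (α_ X (𝟙_ C) (𝟙_ C)).inv := by rw [← h]
        _ = ((α_ X (𝟙_ C) (𝟙_ C)).hom ≫ (X ◁ (λ_ (𝟙_ C)).hom)) ≫ (D X (𝟙_ C)).hom ≫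
              ((X ◁ (λ_ (𝟙_ C)).inv) ≫ (α_ X (𝟙_ C) (𝟙_ C)).inv) := by
            simp only [Category.assoc]
        _ = ((ρ_ X).hom ▷ 𝟙_ C) ≫ (D X (𝟙_ C)).hom ≫ ((ρ_ X).inv ▷ 𝟙_ C) := by
            rw [t1, t2]
    have hn := rightUnitor_naturality (D X (𝟙_ C)).hom
    rw [key, Category.id_comp] at hn
    rw [← cancel_epi (ρ_ (X ⊗ 𝟙_ C)).hom, Category.comp_id]
    exact hn.symm
  · -- D I X = id
    have h := db1 (𝟙_ C) (𝟙_ C) X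
    rw [db0] at h
    have e2 : (D (𝟙_ C) (𝟙_ C ⊗ X)).hom
        = (𝟙 (𝟙_ C) ⊗ₘ (λ_ X).hom) ≫ (D (𝟙_ C) X).hom ≫ (𝟙 (𝟙_ C) ⊗ₘ (λ_ X).inv) := by
      have hn := nat (𝟙 (𝟙_ C)) (λ_ X).hom
      rw [← cancel_mono (𝟙 (𝟙_ C) ⊗ₘ (λ_ X).hom)]
      simp only [Category.assoc, tensorHom_comp_tensorHom, Iso.inv_hom_id, Category.id_comp,
        Category.comp_id, id_tensorHom_id, ← hn]
    have e1 : (D (𝟙_ C ⊗ 𝟙_ C) X).hom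
        = ((ρ_ (𝟙_ C)).hom ⊗ₘ 𝟙 X) ≫ (D (𝟙_ C) X).hom ≫ ((ρ_ (𝟙_ C)).inv ⊗ₘ 𝟙 X) := by
      have hn := nat (ρ_ (𝟙_ C)).hom (𝟙 X)
      rw [← cancel_mono ((ρ_ (𝟙_ C)).hom ⊗ₘ 𝟙 X)]
      simp only [Category.assoc, tensorHom_comp_tensorHom, Iso.inv_hom_id, Category.id_comp,
        Category.comp_id, id_tensorHom_id, ← hn]
    rw [e1, e2] at h
    simp only [tensorHom_id, id_tensorHom, id_tensorHom_id, id_whiskerRight, MonoidalCategory.whiskerLeft_id, Category.id_comp, Category.comp_id] at h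
    have t1 : (α_ (𝟙_ C) (𝟙_ C) X).hom ≫ ((𝟙_ C) ◁ (λ_ X).hom) = (ρ_ (𝟙_ C)).hom ▷ X :=
      triangle (𝟙_ C) X
    have t2' : (ρ_ (𝟙_ C)).inv ▷ X ≫ (α_ (𝟙_ C) (𝟙_ C) X).hom = (𝟙_ C) ◁ (λ_ X).inv := by
      rw [← cancel_mono ((𝟙_ C) ◁ (λ_ X).hom)]
      simp only [Category.assoc, t1]
      simp
    have key : (𝟙_ C) ◁ (D (𝟙_ C) X).hom = 𝟙 (𝟙_ C ⊗ 𝟙_ C ⊗ X) := by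
      rw [← cancel_epi ((ρ_ (𝟙_ C)).hom ▷ X ≫ (D (𝟙_ C) X).hom ≫ (𝟙_ C) ◁ (λ_ X).inv),
        Category.comp_id]
      calc ((ρ_ (𝟙_ C)).hom ▷ X ≫ (D (𝟙_ C) X).hom ≫ (𝟙_ C) ◁ (λ_ X).inv) ≫
            (𝟙_ C) ◁ (D (𝟙_ C) X).hom
          = (((α_ (𝟙_ C) (𝟙_ C) X).hom ≫ (𝟙_ C) ◁ (λ_ X).hom) ≫ (D (𝟙_ C) X).hom ≫
              (𝟙_ C) ◁ (λ_ X).inv) ≫ (𝟙_ C) ◁ (D (𝟙_ C) X).hom := by rw [t1]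
        _ = ((ρ_ (𝟙_ C)).hom ▷ X ≫ (D (𝟙_ C) X).hom ≫ (ρ_ (𝟙_ C)).inv ▷ X) ≫
              (α_ (𝟙_ C) (𝟙_ C) X).hom := by
            rw [h]
            simp only [Category.assoc, Iso.inv_hom_id, Category.comp_id]
        _ = (ρ_ (𝟙_ C)).hom ▷ X ≫ (D (𝟙_ C) X).hom ≫ (𝟙_ C) ◁ (λ_ X).inv := by
            simp only [Category.assoc, t2']
    have hn := leftUnitor_naturality (D (𝟙_ C) X).hom
    rw [key, Category.id_comp] at hn
    rw [← cancel_epi (λ_ (𝟙_ C ⊗ X)).hom, Category.comp_id]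
    exact hn.symm
end

section
/- Let C be a monoidal category and θ a natural automorphism of the identity functor with θ_I = id_I. Define D_{X,Y} = (θ_X^{-1} ⊗ θ_Y^{-1}) ∘ θ_{X⊗Y}. Then D automatically satisfies the fusion axiom (DB1): (D_{X,Y} ⊗ id_Z) ∘ D_{X⊗Y,Z} = (id_X ⊗ D_{Y,Z}) ∘ D_{X,Y⊗Z}. -/
open CategoryTheory MonoidalCategory

/-- Let `θ` be a natural automorphism of the identity functor
with `θ_I = id_I`, and set `D_{X,Y} = (θ_X⁻¹ ⊗ θ_Y⁻¹) ∘ θ_{X⊗Y}`.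
Then `D` automatically satisfies the fusion axiom (DB1). -/
theorem twist_induced_twine_fusion {C : Type*} [Category C] [MonoidalCategory C]
    (θ : ∀ X : C, X ≅ X)
    (nat : ∀ {X Y : C} (f : X ⟶ Y), f ≫ (θ Y).hom = (θ X).hom ≫ f)
    (unit : (θ (𝟙_ C)).hom = 𝟙 (𝟙_ C)) :
    ∀ X Y Z : C,
      letI D : ∀ A B : C, A ⊗ B ⟶ A ⊗ B :=
        fun A B => (θ (A ⊗ B)).hom ≫ ((θ A).inv ⊗ₘ (θ B).inv)
      D (X ⊗ Y) Z ≫ (D X Y ⊗ₘ 𝟙 Z) =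
        (α_ X Y Z).hom ≫ D X (Y ⊗ Z) ≫ (𝟙 X ⊗ₘ D Y Z) ≫ (α_ X Y Z).inv := by
  intro X Y Z
  dsimp only
  simp only [Category.assoc]
  calc (θ ((X ⊗ Y) ⊗ Z)).hom ≫ ((θ (X ⊗ Y)).inv ⊗ₘ (θ Z).inv) ≫
        (((θ (X ⊗ Y)).hom ≫ ((θ X).inv ⊗ₘ (θ Y).inv)) ⊗ₘ 𝟙 Z)
      = (θ ((X ⊗ Y) ⊗ Z)).hom ≫ (((θ X).inv ⊗ₘ (θ Y).inv) ⊗ₘ (θ Z).inv) := by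
        rw [tensorHom_comp_tensorHom, Iso.inv_hom_id_assoc, Category.comp_id]
    _ = (θ ((X ⊗ Y) ⊗ Z)).hom ≫ (α_ X Y Z).hom ≫ ((θ X).inv ⊗ₘ ((θ Y).inv ⊗ₘ (θ Z).inv)) ≫ (α_ X Y Z).inv := by
        rw [associator_inv_naturality, Iso.hom_inv_id_assoc]
    _ = (α_ X Y Z).hom ≫ (θ (X ⊗ (Y ⊗ Z))).hom ≫ ((θ X).inv ⊗ₘ ((θ Y).inv ⊗ₘ (θ Z).inv)) ≫ (α_ X Y Z).inv := by
        rw [← Category.assoc, ← nat (α_ X Y Z).hom, Category.assoc]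
    _ = (α_ X Y Z).hom ≫ ((θ (X ⊗ (Y ⊗ Z))).hom ≫ ((θ X).inv ⊗ₘ (θ (Y ⊗ Z)).inv)) ≫
        ((𝟙 X ⊗ₘ (θ (Y ⊗ Z)).hom ≫ ((θ Y).inv ⊗ₘ (θ Z).inv)) ≫ (α_ X Y Z).inv) := by
        rw [Category.assoc, ← Category.assoc ((θ X).inv ⊗ₘ (θ (Y ⊗ Z)).inv), tensorHom_comp_tensorHom,
          Iso.inv_hom_id_assoc, Category.comp_id]
    _ = _ := by simp
end

section
/- Let C be a braided monoidal category with twist θ satisfying θ_{X⊗Y} = (θ_X ⊗ θ_Y)∘c_{Y,X}∘c_{X,Y}, and suppose X has a right dual (Y, e, h). If θ_X and θ_Y are dual morphisms (i.e., θ_Y = θ_X* under the duality), then θ_X² = (e∘D_{X,Y}^{-1} ⊗ id_X)∘(id_X ⊗ h), where D_{X,Y} = c_{Y,X}∘c_{X,Y}. -/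
set_option maxHeartbeats 1000000
open CategoryTheory MonoidalCategory

theorem swap_e' {C : Type*} [Category C] [MonoidalCategory C] {A B : C}
    (f : A ⟶ 𝟙_ C) (g : B ⟶ 𝟙_ C) :
    (A ◁ g) ≫ (ρ_ A).hom ≫ f = (f ▷ B) ≫ (λ_ B).hom ≫ g := by
  have h1 : (ρ_ A).hom ≫ f = (f ▷ (𝟙_ C)) ≫ (ρ_ (𝟙_ C)).hom := by
    rw [rightUnitor_naturality]
  have h2 : (λ_ B).hom ≫ g = ((𝟙_ C) ◁ g) ≫ (λ_ (𝟙_ C)).hom := by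
    rw [leftUnitor_naturality]
  rw [h1, h2, ← Category.assoc, whisker_exchange, Category.assoc, unitors_equal]

/-- Let `C` be a braided monoidal category with a balanced
structure `θ`, and let `(Y, e, h)` be a right dual of `X`. If `θ_X` and `θ_Y`
are dual morphisms (`θ_Y = (θ_X)*`), then
`θ_X ∘ θ_X = (e ∘ D_{X,Y}⁻¹ ⊗ id_X) ∘ (id_X ⊗ h)`, where
`D_{X,Y} = c_{Y,X} ∘ c_{X,Y}` is the double braiding (unitors and associators
inserted in the non-strict setting). -/
theorem twist_square_of_self_dual {C : Type*} [Category C] [MonoidalCategory C]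
    [BraidedCategory C]
    (θ : ∀ X : C, X ≅ X)
    (nat : ∀ {X Y : C} (f : X ⟶ Y), f ≫ (θ Y).hom = (θ X).hom ≫ f)
    (balanced : ∀ X Y : C,
      (θ (X ⊗ Y)).hom = (β_ X Y).hom ≫ (β_ Y X).hom ≫ ((θ X).hom ⊗ₘ (θ Y).hom))
    (unit : (θ (𝟙_ C)).hom = 𝟙 (𝟙_ C))
    (X Y : C) (e : X ⊗ Y ⟶ 𝟙_ C) (h : 𝟙_ C ⟶ Y ⊗ X)
    (zigzag₁ : (ρ_ X).inv ≫ (𝟙 X ⊗ₘ h) ≫ (α_ X Y X).inv ≫ (e ⊗ₘ 𝟙 X) ≫ (λ_ X).hom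
      = 𝟙 X)
    (zigzag₂ : (λ_ Y).inv ≫ (h ⊗ₘ 𝟙 Y) ≫ (α_ Y X Y).hom ≫ (𝟙 Y ⊗ₘ e) ≫ (ρ_ Y).hom
      = 𝟙 Y)
    (dual : (θ Y).hom =
      (λ_ Y).inv ≫ (h ⊗ₘ 𝟙 Y) ≫ ((𝟙 Y ⊗ₘ (θ X).hom) ⊗ₘ 𝟙 Y) ≫ (α_ Y X Y).hom ≫
        (𝟙 Y ⊗ₘ e) ≫ (ρ_ Y).hom) :
    (θ X).hom ≫ (θ X).hom =
      (ρ_ X).inv ≫ (𝟙 X ⊗ₘ h) ≫ (α_ X Y X).inv ≫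
        ((((β_ Y X).inv ≫ (β_ X Y).inv) ≫ e) ⊗ₘ 𝟙 X) ≫ (λ_ X).hom := by
  simp only [id_tensorHom, tensorHom_id] at zigzag₁ zigzag₂ dual ⊢
  -- sliding a morphism on the left string out of the zigzag
  have slide : ∀ (s : X ⟶ X) ⦃Z : C⦄ (r : (X ⊗ Y) ⊗ X ⟶ Z),
      (ρ_ X).inv ≫ X ◁ h ≫ (α_ X Y X).inv ≫ (s ▷ Y) ▷ X ≫ r
        = s ≫ (ρ_ X).inv ≫ X ◁ h ≫ (α_ X Y X).inv ≫ r := by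
    intro s Z r
    slice_lhs 3 4 => rw [← associator_inv_naturality_left]
    slice_lhs 2 3 => rw [whisker_exchange]
    slice_lhs 1 2 => rw [← rightUnitor_inv_naturality]
    simp only [Category.assoc]
  -- Step B : (X ◁ θY) ≫ e = (θX ▷ Y) ≫ e
  have stepB : (X ◁ (θ Y).hom) ≫ e = ((θ X).hom ▷ Y) ≫ e := by
    have struct1 : (X ◁ ((λ_ Y).inv ≫ h ▷ Y ≫ (Y ◁ (θ X).hom) ▷ Y ≫
          (α_ Y X Y).hom ≫ Y ◁ e ≫ (ρ_ Y).hom)) ≫ e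
        = ((((ρ_ X).inv ≫ (X ◁ h) ≫ (α_ X Y X).inv) ▷ Y) ≫ (α_ (X ⊗ Y) X Y).hom) ≫
            ((X ⊗ Y) ◁ ((θ X).hom ▷ Y)) ≫ ((X ⊗ Y) ◁ e) ≫ (ρ_ (X ⊗ Y)).hom ≫ e := by
      monoidal
    have struct2 : ((((ρ_ X).inv ≫ (X ◁ h) ≫ (α_ X Y X).inv) ▷ Y) ≫
          (α_ (X ⊗ Y) X Y).hom) ≫ (e ▷ (X ⊗ Y)) ≫ (λ_ (X ⊗ Y)).hom
        = ((ρ_ X).inv ≫ (X ◁ h) ≫ (α_ X Y X).inv ≫ (e ▷ X) ≫ (λ_ X).hom) ▷ Y := by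
      monoidal
    calc (X ◁ (θ Y).hom) ≫ e
        = ((((ρ_ X).inv ≫ (X ◁ h) ≫ (α_ X Y X).inv) ▷ Y) ≫ (α_ (X ⊗ Y) X Y).hom) ≫
            ((X ⊗ Y) ◁ ((θ X).hom ▷ Y)) ≫ ((X ⊗ Y) ◁ e) ≫ (ρ_ (X ⊗ Y)).hom ≫ e := by
          rw [dual]; exact struct1
      _ = ((((ρ_ X).inv ≫ (X ◁ h) ≫ (α_ X Y X).inv) ▷ Y) ≫ (α_ (X ⊗ Y) X Y).hom) ≫
            ((X ⊗ Y) ◁ ((θ X).hom ▷ Y)) ≫ (e ▷ (X ⊗ Y)) ≫ (λ_ (X ⊗ Y)).hom ≫ e := by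
          rw [swap_e' e e]
      _ = ((((ρ_ X).inv ≫ (X ◁ h) ≫ (α_ X Y X).inv) ▷ Y) ≫ (α_ (X ⊗ Y) X Y).hom) ≫
            (e ▷ (X ⊗ Y)) ≫ ((𝟙_ C) ◁ ((θ X).hom ▷ Y)) ≫ (λ_ (X ⊗ Y)).hom ≫ e := by
          rw [← Category.assoc ((X ⊗ Y) ◁ ((θ X).hom ▷ Y)), whisker_exchange]
          simp only [Category.assoc]
      _ = ((((ρ_ X).inv ≫ (X ◁ h) ≫ (α_ X Y X).inv) ▷ Y) ≫ (α_ (X ⊗ Y) X Y).hom) ≫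
            (e ▷ (X ⊗ Y)) ≫ (λ_ (X ⊗ Y)).hom ≫ ((θ X).hom ▷ Y) ≫ e := by
          rw [← Category.assoc ((𝟙_ C) ◁ ((θ X).hom ▷ Y)), leftUnitor_naturality]
          simp only [Category.assoc]
      _ = (((ρ_ X).inv ≫ (X ◁ h) ≫ (α_ X Y X).inv ≫ (e ▷ X) ≫ (λ_ X).hom) ▷ Y) ≫
            ((θ X).hom ▷ Y) ≫ e := by
          rw [← struct2]; simp only [Category.assoc]
      _ = ((θ X).hom ▷ Y) ≫ e := by
          rw [zigzag₁, id_whiskerRight, Category.id_comp]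
  -- Step A : the twist is compatible with e
  have key : (β_ X Y).hom ≫ (β_ Y X).hom ≫ ((θ X).hom ⊗ₘ (θ Y).hom) ≫ e = e := by
    have h0 := nat e
    rw [unit, Category.comp_id, balanced X Y] at h0
    simpa using h0.symm
  have h3 : ((θ X).hom ⊗ₘ (θ Y).hom) ≫ e = (((θ X).hom ≫ (θ X).hom) ▷ Y) ≫ e := by
    rw [MonoidalCategory.tensorHom_def, Category.assoc, stepB, comp_whiskerRight, Category.assoc]
  have e2 : (β_ Y X).inv ≫ (β_ X Y).inv ≫ e
      = (((θ X).hom ≫ (θ X).hom) ▷ Y) ≫ e := by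
    rw [Iso.inv_comp_eq, Iso.inv_comp_eq, ← h3]
    exact key.symm
  simp only [Category.assoc]
  rw [e2]
  simp only [comp_whiskerRight, Category.assoc]
  rw [slide, slide, zigzag₁, Category.comp_id]
end
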